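/- The polytope Q₂ equals the convex hull of P₂ in ℝ⁴; that is, Q₂ = conv(P₂). -/

import Mathlib

set_option maxHeartbeats 2000000


/-- The two-period single-generator unit-commitment set `P₂`, as a subset of `ℝ⁴`.
Coordinates: `v 0 = x₁`, `v 1 = x₂`, `v 2 = y₁`, `v 3 = y₂`. -/
def P2 (Cl Cu V Vb : ℝ) : Set (Fin 4 → ℝ) :=
  {v | 0 ≤ v 0 ∧ 0 ≤ v 1 ∧ (v 2 = 0 ∨ v 2 = 1) ∧ (v 3 = 0 ∨ v 3 = 1) ∧
    Cl * v 2 ≤ v 0 ∧ v 0 ≤ Cu * v 2 ∧ Cl * v 3 ≤ v 1 ∧ v 1 ≤ Cu * v 3 ∧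
    v 1 - v 0 ≤ V * v 2 + Vb * (1 - v 2) ∧
    v 0 - v 1 ≤ V * v 3 + Vb * (1 - v 3)}

/-- The polytope `Q₂`, as a subset of `ℝ⁴`. -/
def Q2 (Cl Cu V Vb : ℝ) : Set (Fin 4 → ℝ) :=
  {v | v 2 ≤ 1 ∧ v 3 ≤ 1 ∧
    Cl * v 2 ≤ v 0 ∧ v 0 ≤ Cu * v 2 ∧ Cl * v 3 ≤ v 1 ∧ v 1 ≤ Cu * v 3 ∧
    v 0 ≤ Vb * v 2 + (Cu - Vb) * v 3 ∧
    v 1 ≤ (Cu - Vb) * v 2 + Vb * v 3 ∧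
    v 1 - v 0 ≤ (Cl + V) * v 3 - Cl * v 2 ∧
    v 1 - v 0 ≤ Vb * v 3 - (Vb - V) * v 2 ∧
    v 0 - v 1 ≤ (Cl + V) * v 2 - Cl * v 3 ∧
    v 0 - v 1 ≤ Vb * v 2 - (Vb - V) * v 3}

lemma half (Cl Cu V Vb : ℝ)
    (hCl : 0 < Cl) (hCu : Cl < Cu) (hV : 0 < V)
    (hVVb : Vb + V ≤ Cu) (hVb1 : Cl < Vb) (hVb2 : Vb < Cl + V)
    (v : Fin 4 → ℝ) (hv : v ∈ Q2 Cl Cu V Vb) (hle : v 2 ≤ v 3) :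
    v ∈ convexHull ℝ (P2 Cl Cu V Vb) := by
  obtain ⟨h1, h2, h3, h4, h5, h6, h7, h8, h9, h10, h11, h12⟩ := hv
  set x1 := v 0 with hx1d
  set x2 := v 1 with hx2d
  set y1 := v 2 with hy1d
  set y2 := v 3 with hy2d
  have hy1nn : 0 ≤ y1 := by nlinarith
  have hy2nn : 0 ≤ y2 := le_trans hy1nn hle
  have hx1nn : 0 ≤ x1 := le_trans (mul_nonneg hCl.le hy1nn) h3
  have hx2nn : 0 ≤ x2 := le_trans (mul_nonneg hCl.le hy2nn) h5
  set t := max (max (Cl * y1) (x1 - V * y1)) (x2 - Vb * (y2 - y1)) with htd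
  have hVy1 : 0 ≤ V * y1 := mul_nonneg hV.le hy1nn
  have hCuy1 : Cl * y1 ≤ Cu * y1 := mul_le_mul_of_nonneg_right hCu.le hy1nn
  -- upper bounds on t
  have htCu : t ≤ Cu * y1 := by
    apply max_le (max_le ?_ ?_) ?_ <;> linarith
  have htV : t ≤ x1 + V * y1 := by
    apply max_le (max_le ?_ ?_) ?_ <;> linarith
  have htCl2 : t ≤ x2 - Cl * (y2 - y1) := by
    apply max_le (max_le ?_ ?_) ?_ <;>
      [skip; skip; nlinarith [mul_le_mul_of_nonneg_right hVb1.le (sub_nonneg.mpr hle)]] <;>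
      linarith
  -- lower bounds on t
  have htl1 : Cl * y1 ≤ t := le_max_of_le_left (le_max_left _ _)
  have htl2 : x1 - V * y1 ≤ t := le_max_of_le_left (le_max_right _ _)
  have htl3 : x2 - Vb * (y2 - y1) ≤ t := le_max_right _ _
  have htnn : 0 ≤ t := le_trans (mul_nonneg hCl.le hy1nn) htl1
  -- the three points
  set p11 : Fin 4 → ℝ := if y1 = 0 then ![Cl, Cl, 1, 1] else ![x1/y1, t/y1, 1, 1] with hp11d
  set p01 : Fin 4 → ℝ := if y2 - y1 = 0 then ![0, Cl, 0, 1] else ![0, (x2-t)/(y2-y1), 0, 1]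
    with hp01d
  have hp11 : p11 ∈ P2 Cl Cu V Vb := by
    rw [hp11d]
    split_ifs with h
    · refine ⟨?_, ?_, Or.inr rfl, Or.inr rfl, ?_, ?_, ?_, ?_, ?_, ?_⟩ <;> simp <;> linarith
    · have hy1pos : 0 < y1 := lt_of_le_of_ne hy1nn (Ne.symm h)
      refine ⟨?_, ?_, Or.inr rfl, Or.inr rfl, ?_, ?_, ?_, ?_, ?_, ?_⟩ <;> simp
      · positivity
      · positivity
      · rw [le_div_iff₀ hy1pos]; linarith
      · rw [div_le_iff₀ hy1pos]; linarith
      · rw [le_div_iff₀ hy1pos]; linarith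
      · rw [div_le_iff₀ hy1pos]; linarith
      · rw [div_le_iff₀ hy1pos, add_mul, div_mul_cancel₀ x1 hy1pos.ne']; linarith
      · rw [div_le_iff₀ hy1pos, add_mul, div_mul_cancel₀ t hy1pos.ne']; linarith
  have hp01 : p01 ∈ P2 Cl Cu V Vb := by
    rw [hp01d]
    split_ifs with h
    · refine ⟨le_rfl, hCl.le, Or.inl rfl, Or.inr rfl, ?_, ?_, ?_, ?_, ?_, ?_⟩ <;> simp <;>
        linarith
    · have hdpos : 0 < y2 - y1 := lt_of_le_of_ne (by linarith) (Ne.symm h)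
      have hnum1 : Cl * (y2 - y1) ≤ x2 - t := by linarith
      have hnum2 : x2 - t ≤ Vb * (y2 - y1) := by linarith
      have hVbCu : Vb * (y2 - y1) ≤ Cu * (y2 - y1) :=
        mul_le_mul_of_nonneg_right (by linarith) hdpos.le
      have hbnn : 0 ≤ (x2 - t) / (y2 - y1) :=
        div_nonneg (le_trans (mul_nonneg hCl.le hdpos.le) hnum1) hdpos.le
      refine ⟨le_rfl, hbnn, Or.inl rfl, Or.inr rfl, ?_, ?_, ?_, ?_, ?_, ?_⟩ <;> simp
      · rw [le_div_iff₀ hdpos]; linarith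
      · rw [div_le_iff₀ hdpos]; linarith
      · rw [div_le_iff₀ hdpos]; linarith
      · linarith
  have h00 : (0 : Fin 4 → ℝ) ∈ P2 Cl Cu V Vb := by
    refine ⟨le_rfl, le_rfl, Or.inl rfl, Or.inl rfl, ?_, ?_, ?_, ?_, ?_, ?_⟩ <;> simp <;> linarith
  -- v is the convex combination
  have hveq : v = y1 • p11 + (y2 - y1) • p01 + (1 - y2) • (0 : Fin 4 → ℝ) := by
    have ht0 : y1 = 0 → t = 0 := by
      intro h; rw [h] at htCu htl1; simp at htCu htl1; linarith
    funext i
    fin_cases i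
    · show x1 = y1 * p11 0 + (y2 - y1) * p01 0 + (1 - y2) * 0
      rw [hp11d, hp01d]
      split_ifs with h h' <;>
        simp only [Matrix.cons_val_zero, mul_zero, add_zero]
      · have hx10 : x1 = 0 := by nlinarith [h]
        rw [hx10, h]; ring
      · have hx10 : x1 = 0 := by nlinarith [h]
        rw [hx10, h]; ring
      · field_simp
      · field_simp
    · show x2 = y1 * p11 1 + (y2 - y1) * p01 1 + (1 - y2) * 0
      rw [hp11d, hp01d]
      split_ifs with h h' h'' <;>
        simp only [Matrix.cons_val_one, Matrix.head_cons, Matrix.cons_val_zero, mul_zero, add_zero]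
      · have hy20 : y2 = 0 := by linarith [sub_eq_zero.mp h']
        have hx20 : x2 = 0 := by nlinarith [hy20]
        rw [hx20, h, hy20]; ring
      · have ht : t = 0 := ht0 h
        rw [mul_comm (y2 - y1) _, div_mul_cancel₀ _ h', h, ht]; ring
      · have ht : t = x2 := le_antisymm (by nlinarith [htCl2, h'']) (by nlinarith [htl3, h''])
        rw [mul_comm y1 (t / y1), div_mul_cancel₀ t h, ht, h'']; ring
      · rw [mul_comm y1 (t / y1), div_mul_cancel₀ t h,
          mul_comm (y2 - y1) _, div_mul_cancel₀ _ h'']; ring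
    · show y1 = y1 * p11 2 + (y2 - y1) * p01 2 + (1 - y2) * 0
      rw [hp11d, hp01d]; split_ifs <;> simp only [Matrix.cons_val] <;> norm_num
    · show y2 = y1 * p11 3 + (y2 - y1) * p01 3 + (1 - y2) * 0
      rw [hp11d, hp01d]; split_ifs <;> simp only [Matrix.cons_val] <;> norm_num <;> ring
  have hsum : v = ∑ i : Fin 3, (![y1, y2 - y1, 1 - y2] i) • (![p11, p01, 0] i) := by
    rw [hveq]; simp [Fin.sum_univ_three]
  rw [hsum]
  refine (convex_convexHull ℝ _).sum_mem (fun i _ => ?_) (by simp [Fin.sum_univ_three]) 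
    (fun i _ => ?_)
  · fin_cases i <;> simp <;> linarith
  · fin_cases i <;> simp only [Matrix.cons_val_zero, Matrix.cons_val_one, Matrix.head_cons,
      Matrix.cons_val_two, Matrix.tail_cons] <;>
      exact subset_convexHull ℝ _ (by assumption)

lemma p2_subset_q2 (Cl Cu V Vb : ℝ)
    (hCl : 0 < Cl) (hCu : Cl < Cu) (hV : 0 < V)
    (hVVb : Vb + V ≤ Cu) (hVb1 : Cl < Vb) (hVb2 : Vb < Cl + V) :
    P2 Cl Cu V Vb ⊆ Q2 Cl Cu V Vb := by
  intro v hv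
  obtain ⟨p1, p2, p3, p4, p5, p6, p7, p8, p9, p10⟩ := hv
  rcases p3 with h | h <;> rcases p4 with h' | h' <;>
    refine ⟨?_, ?_, ?_, ?_, ?_, ?_, ?_, ?_, ?_, ?_, ?_, ?_⟩ <;>
    simp only [h, h'] at * <;> linarith

lemma q2_convex (Cl Cu V Vb : ℝ) : Convex ℝ (Q2 Cl Cu V Vb) := by
  intro u hu w hw a b ha hb hab
  obtain ⟨a1, a2, a3, a4, a5, a6, a7, a8, a9, a10, a11, a12⟩ := hu
  obtain ⟨b1, b2, b3, b4, b5, b6, b7, b8, b9, b10, b11, b12⟩ := hw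
  refine ⟨?_, ?_, ?_, ?_, ?_, ?_, ?_, ?_, ?_, ?_, ?_, ?_⟩ <;>
    simp only [Pi.add_apply, Pi.smul_apply, smul_eq_mul] <;>
    linarith [mul_le_mul_of_nonneg_left a1 ha, mul_le_mul_of_nonneg_left b1 hb,
      mul_le_mul_of_nonneg_left a2 ha, mul_le_mul_of_nonneg_left b2 hb,
      mul_le_mul_of_nonneg_left a3 ha, mul_le_mul_of_nonneg_left b3 hb,
      mul_le_mul_of_nonneg_left a4 ha, mul_le_mul_of_nonneg_left b4 hb,
      mul_le_mul_of_nonneg_left a5 ha, mul_le_mul_of_nonneg_left b5 hb,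
      mul_le_mul_of_nonneg_left a6 ha, mul_le_mul_of_nonneg_left b6 hb,
      mul_le_mul_of_nonneg_left a7 ha, mul_le_mul_of_nonneg_left b7 hb,
      mul_le_mul_of_nonneg_left a8 ha, mul_le_mul_of_nonneg_left b8 hb,
      mul_le_mul_of_nonneg_left a9 ha, mul_le_mul_of_nonneg_left b9 hb,
      mul_le_mul_of_nonneg_left a10 ha, mul_le_mul_of_nonneg_left b10 hb,
      mul_le_mul_of_nonneg_left a11 ha, mul_le_mul_of_nonneg_left b11 hb,
      mul_le_mul_of_nonneg_left a12 ha, mul_le_mul_of_nonneg_left b12 hb]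

def ucPerm : Fin 4 → Fin 4 := ![1, 0, 3, 2]

lemma p2_swap (Cl Cu V Vb : ℝ) :
    (LinearMap.funLeft ℝ ℝ ucPerm) '' P2 Cl Cu V Vb ⊆ P2 Cl Cu V Vb := by
  rintro _ ⟨u, hu, rfl⟩
  obtain ⟨p1, p2, p3, p4, p5, p6, p7, p8, p9, p10⟩ := hu
  refine ⟨?_, ?_, ?_, ?_, ?_, ?_, ?_, ?_, ?_, ?_⟩ <;>
    simp only [LinearMap.funLeft_apply, ucPerm, Matrix.cons_val_zero, Matrix.cons_val_one,
      Matrix.head_cons, Matrix.cons_val_two, Matrix.tail_cons, Matrix.cons_val_three] <;>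
    first | assumption | tauto

lemma q2_swap (Cl Cu V Vb : ℝ) (v : Fin 4 → ℝ) (hv : v ∈ Q2 Cl Cu V Vb) :
    (LinearMap.funLeft ℝ ℝ ucPerm) v ∈ Q2 Cl Cu V Vb := by
  obtain ⟨a1, a2, a3, a4, a5, a6, a7, a8, a9, a10, a11, a12⟩ := hv
  refine ⟨?_, ?_, ?_, ?_, ?_, ?_, ?_, ?_, ?_, ?_, ?_, ?_⟩ <;>
    simp only [LinearMap.funLeft_apply, ucPerm, Matrix.cons_val_zero, Matrix.cons_val_one,
      Matrix.head_cons, Matrix.cons_val_two, Matrix.tail_cons, Matrix.cons_val_three] <;>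
    linarith

theorem stmt_3 (Cl Cu V Vb : ℝ)
    (hCl : 0 < Cl) (hCu : Cl < Cu) (hV : 0 < V)
    (hVVb : Vb + V ≤ Cu) (hVb1 : Cl < Vb) (hVb2 : Vb < Cl + V) :
    Q2 Cl Cu V Vb = convexHull ℝ (P2 Cl Cu V Vb) := by
  apply Set.Subset.antisymm
  · intro v hv
    rcases le_total (v 2) (v 3) with hle | hle
    · exact half Cl Cu V Vb hCl hCu hV hVVb hVb1 hVb2 v hv hle
    · have h1 : (LinearMap.funLeft ℝ ℝ ucPerm) v ∈ Q2 Cl Cu V Vb := q2_swap _ _ _ _ _ hv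
      have h2 : (LinearMap.funLeft ℝ ℝ ucPerm) v ∈ convexHull ℝ (P2 Cl Cu V Vb) := by
        apply half Cl Cu V Vb hCl hCu hV hVVb hVb1 hVb2 _ h1
        simp only [LinearMap.funLeft_apply, ucPerm, Matrix.cons_val_two, Matrix.tail_cons,
          Matrix.head_cons, Matrix.cons_val_three]
        exact hle
      have h3 : v = (LinearMap.funLeft ℝ ℝ ucPerm) ((LinearMap.funLeft ℝ ℝ ucPerm) v) := by
        funext i
        fin_cases i <;> rfl
      rw [h3]
      have h4 : (LinearMap.funLeft ℝ ℝ ucPerm) ((LinearMap.funLeft ℝ ℝ ucPerm) v) ∈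
          (LinearMap.funLeft ℝ ℝ ucPerm) '' (convexHull ℝ (P2 Cl Cu V Vb)) :=
        ⟨_, h2, rfl⟩
      rw [LinearMap.image_convexHull] at h4
      exact convexHull_mono (p2_swap Cl Cu V Vb) h4
  · exact convexHull_min (p2_subset_q2 Cl Cu V Vb hCl hCu hV hVVb hVb1 hVb2)
      (q2_convex Cl Cu V Vb)
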